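/- If f is in H^1 of the circle S = R/Z and has zero mean, i.e. ∫_S f(x) dx = 0, then max_{x∈S} f(x)^2 ≤ (1/12) ∫_S f_x(x)^2 dx. -/

import Mathlib

open MeasureTheory intervalIntegral

/-- Cauchy–Schwarz for interval integrals of continuous functions. -/
lemma cs_interval (u v : ℝ → ℝ) (hu : Continuous u) (hv : Continuous v)
    {a b : ℝ} (hab : a ≤ b) :
    (∫ x in a..b, u x * v x) ^ 2 ≤
      (∫ x in a..b, (u x) ^ 2) * (∫ x in a..b, (v x) ^ 2) := by
  set A := ∫ x in a..b, (u x) ^ 2 with hA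
  set B := ∫ x in a..b, u x * v x with hB
  set C := ∫ x in a..b, (v x) ^ 2 with hC
  have key : ∀ t : ℝ, 0 ≤ A * (t * t) + (2 * B) * t + C := by
    intro t
    have h1 : (0:ℝ) ≤ ∫ x in a..b, (t * u x + v x) ^ 2 :=
      intervalIntegral.integral_nonneg hab (fun x _ => sq_nonneg _)
    have h2 : (∫ x in a..b, (t * u x + v x) ^ 2)
        = A * (t * t) + (2 * B) * t + C := by
      have e : ∀ x, (t * u x + v x) ^ 2
          = (t * t) * (u x ^ 2) + (2 * t) * (u x * v x) + v x ^ 2 := by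
        intro x; ring
      rw [hA, hB, hC]
      simp only [e]
      rw [intervalIntegral.integral_add (by apply Continuous.intervalIntegrable; fun_prop)
          (by apply Continuous.intervalIntegrable; fun_prop),
        intervalIntegral.integral_add
          (by apply Continuous.intervalIntegrable; fun_prop)
          (by apply Continuous.intervalIntegrable; fun_prop),
        intervalIntegral.integral_const_mul, intervalIntegral.integral_const_mul]
      ring
    linarith [h2 ▸ h1]
  have hd := discrim_le_zero key
  rw [discrim] at hd
  nlinarith [hd]

theorem max_sq_le_twelfth_integral_deriv_sq
    (f f' : ℝ → ℝ)
    (hper : Function.Periodic f 1)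
    (hderiv : ∀ x, HasDerivAt f (f' x) x)
    (hcont : Continuous f')
    (hmean : (∫ x in (0:ℝ)..1, f x) = 0) :
    ∀ x : ℝ, (f x) ^ 2 ≤ (1 / 12) * ∫ x in (0:ℝ)..1, (f' x) ^ 2 := by
  intro y
  have hfc : Continuous f := by
    have : Differentiable ℝ f := fun x => (hderiv x).differentiableAt
    exact this.continuous
  -- periodicity of f'
  have hper' : Function.Periodic f' 1 := by
    intro x
    have h1 : HasDerivAt (fun t => f (t + 1)) (f' (x + 1)) x := by
      simpa [Function.comp_def] using (hderiv (x + 1)).comp x ((hasDerivAt_id x).add_const 1)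
    have h2 : (fun t : ℝ => f (t + 1)) = f := funext fun t => hper t
    rw [h2] at h1
    exact h1.unique (hderiv x)
  -- derivative of the shifted function
  have hg : ∀ x : ℝ, HasDerivAt (fun t => f (t + y)) (f' (x + y)) x := fun x => by
    simpa [Function.comp_def] using (hderiv (x + y)).comp x ((hasDerivAt_id x).add_const y)
  have hg'c : Continuous fun x => f' (x + y) := hcont.comp (continuous_id.add continuous_const)
  -- the shifted mean is zero
  have hshift : (∫ x in (0:ℝ)..1, f (x + y)) = 0 := by
    rw [intervalIntegral.integral_comp_add_right (fun x => f x) y]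
    have := hper.intervalIntegral_add_eq y 0
    simp only [zero_add] at this
    rw [add_comm y 1] at this
    rw [zero_add, this, hmean]
  -- integration by parts identity: f y = ∫ (x - 1/2) f'(x+y)
  have hparts : f y = ∫ x in (0:ℝ)..1, (x - 1/2) * f' (x + y) := by
    have h := intervalIntegral.integral_mul_deriv_eq_deriv_mul
      (u := fun x : ℝ => x - 1/2) (u' := fun _ : ℝ => (1:ℝ))
      (v := fun x => f (x + y)) (v' := fun x => f' (x + y))
      (a := 0) (b := 1)
      (fun x _ => (hasDerivAt_id x).sub_const (1/2))
      (fun x _ => hg x)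
      (continuous_const.intervalIntegrable 0 1)
      (hg'c.intervalIntegrable 0 1)
    simp only [one_mul] at h
    rw [h, hshift]
    have h1 : f (1 + y) = f y := by rw [add_comm]; exact hper y
    rw [h1]; ring
  -- Cauchy–Schwarz
  have hcs := cs_interval (fun x => x - 1/2) (fun x => f' (x + y))
    (continuous_id.sub continuous_const) hg'c (by norm_num : (0:ℝ) ≤ 1)
  rw [← hparts] at hcs
  -- compute ∫ (x - 1/2)^2 = 1/12
  have hkernel : (∫ x in (0:ℝ)..1, (x - 1/2) ^ 2) = 1/12 := by
    have hd : ∀ x ∈ Set.uIcc (0:ℝ) 1,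
        HasDerivAt (fun x : ℝ => (x - 1/2) ^ 3 / 3) ((x - 1/2) ^ 2) x := by
      intro x _
      have := (((hasDerivAt_id x).sub_const (1/2)).pow 3).div_const 3
      exact this.congr_deriv (by simp only [id_eq]; ring)
    rw [intervalIntegral.integral_eq_sub_of_hasDerivAt hd
      (((continuous_id.sub continuous_const).pow 2).intervalIntegrable 0 1)]
    norm_num
  -- shift invariance of ∫ f'^2
  have hshift2 : (∫ x in (0:ℝ)..1, (f' (x + y)) ^ 2) = ∫ x in (0:ℝ)..1, (f' x) ^ 2 := by
    rw [intervalIntegral.integral_comp_add_right (fun x => (f' x) ^ 2) y]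
    have hper2 : Function.Periodic (fun x => (f' x) ^ 2) 1 := fun x => by
      simp [hper' x]
    have := hper2.intervalIntegral_add_eq y 0
    simp only [zero_add] at this
    rw [add_comm y 1] at this
    rw [zero_add]; exact this
  rw [hkernel, hshift2] at hcs
  exact hcs
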